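/- Let P, G ∈ ℝ_{>0}^{m×n} and γ > 0. Let w ∈ ℝ_{>0}^m, set ℓ_i = ℓ_i(P,G,w) for all i, define w'_i = γ·w_i/ℓ_i and ℓ'_i = ℓ_i(P,G,w'), and let p̃_i = Σ_{j=1}^n p_{i,j}. Writing ℓ_min = min_{i∈[m]} ℓ_i and ℓ_max = max_{i∈[m]} ℓ_i, we have for every i ∈ [m]: ℓ'_i ≥ ℓ_min / (1 − (ℓ_i − ℓ_min)/p̃_i) and ℓ'_i ≤ ℓ_max / (1 + (ℓ_max − ℓ_i)/p̃_i). -/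

import Mathlib

open Finset

/-- GP-allocation: fraction of item `j` assigned to agent `i`. -/
noncomputable def gpAlloc {m n : ℕ} (G : Fin m → Fin n → ℝ) (w : Fin m → ℝ)
    (i : Fin m) (j : Fin n) : ℝ :=
  G i j * w i / ∑ i', G i' j * w i'

/-- Load of agent `i` under the GP-allocation. -/
noncomputable def gpLoad {m n : ℕ} (P G : Fin m → Fin n → ℝ) (w : Fin m → ℝ)
    (i : Fin m) : ℝ :=
  ∑ j, gpAlloc G w i j * P i j

lemma tangent_low {x x0 a L e : ℝ} (hL : 0 < L) (ha : 0 < a) (hLa : L ≤ a)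
    (hx1 : x ≤ 1) (hx01 : x0 ≤ 1) (he : e = a - (a - L) * x0) :
    (L * x0 * e + L * a * (x - x0)) / e ^ 2 ≤ x * L / (a - (a - L) * x) := by
  subst he
  have hd0 : 0 < a - (a - L) * x := by nlinarith
  have he0 : 0 < a - (a - L) * x0 := by nlinarith
  rw [div_le_div_iff₀ (pow_pos he0 2) hd0]
  nlinarith [mul_nonneg (mul_nonneg (mul_nonneg hL.le ha.le) (sub_nonneg.2 hLa)) (sq_nonneg (x - x0))]

lemma jensen_low {n : ℕ} (q X Y : Fin n → ℝ) (a L p : ℝ)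
    (hq : ∀ j, 0 < q j) (hX1 : ∀ j, X j ≤ 1)
    (hL : 0 < L) (ha : 0 < a) (hLa : L ≤ a) (hap : a ≤ p)
    (hp : ∑ j, q j = p) (haX : ∑ j, X j * q j = a)
    (hY : ∀ j, X j * L / (a - (a - L) * X j) ≤ Y j) :
    L / (1 - (a - L) / p) ≤ ∑ j, Y j * q j := by
  have hp0 : 0 < p := ha.trans_le hap
  obtain ⟨x0, hx0p, hx01, hx00⟩ : ∃ x0 : ℝ, x0 * p = a ∧ x0 ≤ 1 ∧ 0 < x0 :=
    ⟨a / p, by field_simp, (div_le_one hp0).2 hap, by positivity⟩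
  obtain ⟨e, hedef⟩ : ∃ e : ℝ, e = a - (a - L) * x0 := ⟨_, rfl⟩
  have he0 : 0 < e := by rw [hedef]; nlinarith
  have htan : ∀ j, (L * x0 * e + L * a * (X j - x0)) / e ^ 2 ≤ Y j :=
    fun j => (tangent_low hL ha hLa (hX1 j) hx01 hedef).trans (hY j)
  have hsum : ∑ j, ((L * x0 * e + L * a * (X j - x0)) / e ^ 2) * q j = L * a / e := by
    have h1 : ∑ j, ((L * x0 * e + L * a * (X j - x0)) / e ^ 2) * q j
        = ((L * x0 * e - L * a * x0) / e ^ 2) * (∑ j, q j)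
          + (L * a / e ^ 2) * (∑ j, X j * q j) := by
      rw [Finset.mul_sum, Finset.mul_sum, ← Finset.sum_add_distrib]
      exact Finset.sum_congr rfl fun j _ => by ring
    rw [h1, hp, haX]
    have h2 : (L * x0 * e - L * a * x0) / e ^ 2 * p + L * a / e ^ 2 * a
        = ((L * x0 * e - L * a * x0) * p + L * a * a) / e ^ 2 := by ring
    rw [h2, div_eq_div_iff (pow_pos he0 2).ne' he0.ne']
    linear_combination (L * e ^ 2 - L * a * e) * hx0p
  have hmain : L * a / e ≤ ∑ j, Y j * q j := by
    rw [← hsum]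
    exact Finset.sum_le_sum fun j _ => mul_le_mul_of_nonneg_right (htan j) (hq j).le
  refine le_trans (le_of_eq ?_) hmain
  have h2 : (0:ℝ) < p - a + L := by nlinarith
  have h3 : (1 : ℝ) - (a - L) / p = (p - a + L) / p := by field_simp; ring
  rw [h3, div_div_eq_mul_div, div_eq_div_iff h2.ne' he0.ne', hedef]
  linear_combination (-(L * (a - L))) * hx0p

lemma tangent_up {x x0 a U e : ℝ} (hU : 0 < U) (ha : 0 < a) (haU : a ≤ U)
    (hx0 : 0 ≤ x) (hx00 : 0 ≤ x0) (he : e = a + (U - a) * x0) :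
    x * U / (a + (U - a) * x) ≤ (U * x0 * e + U * a * (x - x0)) / e ^ 2 := by
  subst he
  have hd0 : 0 < a + (U - a) * x := by nlinarith
  have he0 : 0 < a + (U - a) * x0 := by nlinarith
  rw [div_le_div_iff₀ hd0 (pow_pos he0 2)]
  nlinarith [mul_nonneg (mul_nonneg (mul_nonneg hU.le ha.le) (sub_nonneg.2 haU)) (sq_nonneg (x - x0))]

lemma jensen_up {n : ℕ} (q X Y : Fin n → ℝ) (a U p : ℝ)
    (hq : ∀ j, 0 < q j) (hX0 : ∀ j, 0 ≤ X j)
    (hU : 0 < U) (ha : 0 < a) (haU : a ≤ U) (hap : a ≤ p)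
    (hp : ∑ j, q j = p) (haX : ∑ j, X j * q j = a)
    (hY : ∀ j, Y j ≤ X j * U / (a + (U - a) * X j)) :
    ∑ j, Y j * q j ≤ U / (1 + (U - a) / p) := by
  have hp0 : 0 < p := ha.trans_le hap
  obtain ⟨x0, hx0p, hx00⟩ : ∃ x0 : ℝ, x0 * p = a ∧ 0 ≤ x0 :=
    ⟨a / p, by field_simp, by positivity⟩
  obtain ⟨e, hedef⟩ : ∃ e : ℝ, e = a + (U - a) * x0 := ⟨_, rfl⟩
  have he0 : 0 < e := by rw [hedef]; nlinarith
  have htan : ∀ j, Y j ≤ (U * x0 * e + U * a * (X j - x0)) / e ^ 2 :=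
    fun j => (hY j).trans (tangent_up hU ha haU (hX0 j) hx00 hedef)
  have hsum : ∑ j, ((U * x0 * e + U * a * (X j - x0)) / e ^ 2) * q j = U * a / e := by
    have h1 : ∑ j, ((U * x0 * e + U * a * (X j - x0)) / e ^ 2) * q j
        = ((U * x0 * e - U * a * x0) / e ^ 2) * (∑ j, q j)
          + (U * a / e ^ 2) * (∑ j, X j * q j) := by
      rw [Finset.mul_sum, Finset.mul_sum, ← Finset.sum_add_distrib]
      exact Finset.sum_congr rfl fun j _ => by ring
    rw [h1, hp, haX]
    have h2 : (U * x0 * e - U * a * x0) / e ^ 2 * p + U * a / e ^ 2 * a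
        = ((U * x0 * e - U * a * x0) * p + U * a * a) / e ^ 2 := by ring
    rw [h2, div_eq_div_iff (pow_pos he0 2).ne' he0.ne']
    linear_combination (U * e ^ 2 - U * a * e) * hx0p
  have hmain : ∑ j, Y j * q j ≤ U * a / e := by
    rw [← hsum]
    exact Finset.sum_le_sum fun j _ => mul_le_mul_of_nonneg_right (htan j) (hq j).le
  refine hmain.trans (le_of_eq ?_)
  have h2 : (0:ℝ) < p + U - a := by nlinarith
  have h3 : (1 : ℝ) + (U - a) / p = (p + U - a) / p := by field_simp; ring
  rw [h3, div_div_eq_mul_div, div_eq_div_iff he0.ne' h2.ne', hedef]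
  linear_combination (U * (a - U)) * hx0p

lemma frac_low {s D D' a L γ : ℝ} (hs : 0 < s) (hsD : s ≤ D) (hD : 0 < D)
    (ha : 0 < a) (hL : 0 < L) (hLa : L ≤ a) (hγ : 0 < γ) (hD' : 0 < D')
    (hden : D' ≤ γ * s / a + γ / L * (D - s)) :
    (s / D) * L / (a - (a - L) * (s / D)) ≤ (γ * s / a) / D' := by
  have hB : 0 < γ * s / a + γ / L * (D - s) :=
    add_pos_of_pos_of_nonneg (by positivity) (mul_nonneg (by positivity) (by linarith))
  have hx1 : s / D ≤ 1 := (div_le_one hD).2 hsD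
  have hx0 : 0 < s / D := div_pos hs hD
  have hd1 : 0 < a - (a - L) * (s / D) := by nlinarith
  have h1 : γ * s / a / (γ * s / a + γ / L * (D - s)) ≤ γ * s / a / D' :=
    div_le_div_of_nonneg_left (by positivity) hD' hden
  refine le_trans (le_of_eq ?_) h1
  rw [div_eq_div_iff hd1.ne' hB.ne']
  field_simp
  ring

lemma frac_up {s D D' a U γ : ℝ} (hs : 0 < s) (hsD : s ≤ D) (hD : 0 < D)
    (ha : 0 < a) (hU : 0 < U) (haU : a ≤ U) (hγ : 0 < γ) (hD' : 0 < D')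
    (hden : γ * s / a + γ / U * (D - s) ≤ D') :
    (γ * s / a) / D' ≤ (s / D) * U / (a + (U - a) * (s / D)) := by
  have hB : 0 < γ * s / a + γ / U * (D - s) :=
    add_pos_of_pos_of_nonneg (by positivity) (mul_nonneg (by positivity) (by linarith))
  have hx0 : 0 < s / D := div_pos hs hD
  have hd1 : 0 < a + (U - a) * (s / D) := by nlinarith
  have h1 : γ * s / a / D' ≤ γ * s / a / (γ * s / a + γ / U * (D - s)) :=
    div_le_div_of_nonneg_left (by positivity) hB hden
  refine h1.trans (le_of_eq ?_)
  rw [div_eq_div_iff hB.ne' hd1.ne']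
  field_simp
  ring

theorem stmt3 {m n : ℕ} (hm : 0 < m) (P G : Fin m → Fin n → ℝ)
    (hP : ∀ i j, 0 < P i j) (hG : ∀ i j, 0 < G i j)
    (γ : ℝ) (hγ : 0 < γ) (w : Fin m → ℝ) (hw : ∀ i, 0 < w i)
    (ℓ ℓ' : Fin m → ℝ)
    (hℓ : ∀ i, ℓ i = gpLoad P G w i)
    (hℓ' : ∀ i, ℓ' i = gpLoad P G (fun i => γ * w i / ℓ i) i)
    (ptil : Fin m → ℝ) (hptil : ∀ i, ptil i = ∑ j, P i j) :
    ∀ i, (⨅ k, ℓ k) / (1 - (ℓ i - ⨅ k, ℓ k) / ptil i) ≤ ℓ' i ∧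
      ℓ' i ≤ (⨆ k, ℓ k) / (1 + ((⨆ k, ℓ k) - ℓ i) / ptil i) := by
  intro i
  haveI : Nonempty (Fin m) := ⟨⟨0, hm⟩⟩
  obtain ⟨kmin, hkmin⟩ := Finite.exists_min ℓ
  obtain ⟨kmax, hkmax⟩ := Finite.exists_max ℓ
  have hInf : (⨅ k, ℓ k) = ℓ kmin :=
    le_antisymm (ciInf_le (Set.Finite.bddBelow (Set.finite_range ℓ)) kmin) (le_ciInf hkmin)
  have hSup : (⨆ k, ℓ k) = ℓ kmax :=
    le_antisymm (ciSup_le hkmax) (le_ciSup (Set.Finite.bddAbove (Set.finite_range ℓ)) kmax)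
  rcases Nat.eq_zero_or_pos n with hn | hn
  · subst hn
    have hz : ∀ k, ℓ k = 0 := fun k => by rw [hℓ k]; simp [gpLoad]
    rw [hℓ' i, hInf, hSup, hz kmin, hz kmax, hz i]
    simp [gpLoad]
  haveI : Nonempty (Fin n) := ⟨⟨0, hn⟩⟩
  have hDpos : ∀ j, 0 < ∑ i', G i' j * w i' :=
    fun j => Finset.sum_pos (fun i' _ => mul_pos (hG i' j) (hw i')) Finset.univ_nonempty
  have hXpos : ∀ k j, 0 < gpAlloc G w k j :=
    fun k j => div_pos (mul_pos (hG k j) (hw k)) (hDpos j)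
  have hsD : ∀ j, G i j * w i ≤ ∑ i', G i' j * w i' :=
    fun j => Finset.single_le_sum (fun i' _ => (mul_pos (hG i' j) (hw i')).le) (Finset.mem_univ i)
  have hX1 : ∀ j, gpAlloc G w i j ≤ 1 := fun j => by
    rw [gpAlloc, div_le_one (hDpos j)]; exact hsD j
  have hℓpos : ∀ k, 0 < ℓ k := fun k => by
    rw [hℓ k]
    exact Finset.sum_pos (fun j _ => mul_pos (hXpos k j) (hP k j)) Finset.univ_nonempty
  have hD'pos : ∀ j, 0 < ∑ i', G i' j * (γ * w i' / ℓ i') :=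
    fun j => Finset.sum_pos
      (fun i' _ => mul_pos (hG i' j) (div_pos (mul_pos hγ (hw i')) (hℓpos i'))) Finset.univ_nonempty
  have hXa : ∑ j, gpAlloc G w i j * P i j = ℓ i := by rw [hℓ i, gpLoad]
  have hap : ℓ i ≤ ptil i := by
    rw [hptil i, ← hXa]
    refine Finset.sum_le_sum fun j _ => ?_
    nlinarith [hX1 j, hP i j, hXpos i j]
  have hℓ'eq : ℓ' i = ∑ j, gpAlloc G (fun k => γ * w k / ℓ k) i j * P i j := by
    rw [hℓ' i, gpLoad]
  have hallocEq : ∀ j, gpAlloc G (fun k => γ * w k / ℓ k) i j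
      = (γ * (G i j * w i) / ℓ i) / ∑ i', G i' j * (γ * w i' / ℓ i') := by
    intro j
    rw [gpAlloc]
    congr 1
    ring
  -- denominator bounds
  have hdenLow : ∀ j, ∑ i', G i' j * (γ * w i' / ℓ i')
      ≤ γ * (G i j * w i) / ℓ i + γ / ℓ kmin * ((∑ i', G i' j * w i') - G i j * w i) := by
    intro j
    rw [← Finset.add_sum_erase _ (fun i' => G i' j * (γ * w i' / ℓ i')) (Finset.mem_univ i),
      ← Finset.sum_erase_eq_sub (f := fun i' => G i' j * w i') (Finset.mem_univ i)]
    have h1 : G i j * (γ * w i / ℓ i) = γ * (G i j * w i) / ℓ i := by ring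
    rw [h1, Finset.mul_sum]
    refine add_le_add_right (Finset.sum_le_sum fun i' _ => ?_) _
    have h2 : γ * w i' / ℓ i' ≤ γ * w i' / ℓ kmin :=
      div_le_div_of_nonneg_left (mul_pos hγ (hw i')).le (hℓpos kmin) (hkmin i')
    calc G i' j * (γ * w i' / ℓ i') ≤ G i' j * (γ * w i' / ℓ kmin) :=
          mul_le_mul_of_nonneg_left h2 (hG i' j).le
      _ = γ / ℓ kmin * (G i' j * w i') := by ring
  have hdenUp : ∀ j, γ * (G i j * w i) / ℓ i + γ / ℓ kmax * ((∑ i', G i' j * w i') - G i j * w i)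
      ≤ ∑ i', G i' j * (γ * w i' / ℓ i') := by
    intro j
    rw [← Finset.add_sum_erase _ (fun i' => G i' j * (γ * w i' / ℓ i')) (Finset.mem_univ i),
      ← Finset.sum_erase_eq_sub (f := fun i' => G i' j * w i') (Finset.mem_univ i)]
    have h1 : G i j * (γ * w i / ℓ i) = γ * (G i j * w i) / ℓ i := by ring
    rw [h1, Finset.mul_sum]
    refine add_le_add_right (Finset.sum_le_sum fun i' _ => ?_) _
    have h2 : γ * w i' / ℓ kmax ≤ γ * w i' / ℓ i' :=
      div_le_div_of_nonneg_left (mul_pos hγ (hw i')).le (hℓpos i') (hkmax i')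
    calc γ / ℓ kmax * (G i' j * w i') = G i' j * (γ * w i' / ℓ kmax) := by ring
      _ ≤ G i' j * (γ * w i' / ℓ i') := mul_le_mul_of_nonneg_left h2 (hG i' j).le
  constructor
  · rw [hInf, hℓ'eq, hptil i]
    refine jensen_low (fun j => P i j) (gpAlloc G w i) _ (ℓ i) (ℓ kmin) (∑ j, P i j)
      (hP i) hX1 (hℓpos kmin) (hℓpos i) (hkmin i) (by rw [← hptil i]; exact hap) rfl
      (by rw [hXa]) (fun j => ?_)
    rw [hallocEq j]
    have := frac_low (mul_pos (hG i j) (hw i)) (hsD j) (hDpos j) (hℓpos i) (hℓpos kmin)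
      (hkmin i) hγ (hD'pos j) (hdenLow j)
    simpa [gpAlloc] using this
  · rw [hSup, hℓ'eq, hptil i]
    refine jensen_up (fun j => P i j) (gpAlloc G w i) _ (ℓ i) (ℓ kmax) (∑ j, P i j)
      (hP i) (fun j => (hXpos i j).le) (hℓpos kmax) (hℓpos i) (hkmax i)
      (by rw [← hptil i]; exact hap) rfl (by rw [hXa]) (fun j => ?_)
    rw [hallocEq j]
    have := frac_up (mul_pos (hG i j) (hw i)) (hsD j) (hDpos j) (hℓpos i) (hℓpos kmax)
      (hkmax i) hγ (hD'pos j) (hdenUp j)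
    simpa [gpAlloc] using this
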